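/- Two-point Jacobian system: under the conditions of the two-point kernel identity, with Δ(z₁,z₂) := 1 − (L_A(z₁,z₂)/(m_fc(z₁)m_fc(z₂)) − 1)(L_B(z₁,z₂)/(m_fc(z₁)m_fc(z₂)) − 1) ≠ 0, the differences of subordination functions satisfy ω_A(z₁) − ω_A(z₂) = (z₁ − z₂) L_B(z₁,z₂) / (Δ(z₁,z₂) m_fc(z₁) m_fc(z₂)) and ω_B(z₁) − ω_B(z₂) = (z₁ − z₂) L_A(z₁,z₂) / (Δ(z₁,z₂) m_fc(z₁) m_fc(z₂)). -/
import Mathlib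


/-- The two-point sum `L(z₁,z₂) = (1/N) Σ_j [(c_j − ω(z₁))(c_j − ω(z₂))]⁻¹`. -/
noncomputable def twoPointSum {N : ℕ} (c : Fin N → ℝ) (ω : ℂ → ℂ) (z₁ z₂ : ℂ) : ℂ :=
  (1 / (N : ℂ)) * ∑ j : Fin N, (((c j : ℂ) - ω z₁) * ((c j : ℂ) - ω z₂))⁻¹

/-- The two-point Jacobian
`Δ(z₁,z₂) = 1 − (L_A/(m₁m₂) − 1)(L_B/(m₁m₂) − 1)`. -/
noncomputable def twoPointJacobian {N : ℕ} (a b : Fin N → ℝ) (ωA ωB mfc : ℂ → ℂ)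
    (z₁ z₂ : ℂ) : ℂ :=
  1 - (twoPointSum b ωA z₁ z₂ / (mfc z₁ * mfc z₂) - 1) *
      (twoPointSum a ωB z₁ z₂ / (mfc z₁ * mfc z₂) - 1)

lemma diff_rep {N : ℕ} (c : Fin N → ℝ) (w₁ w₂ : ℂ)
    (h₁ : ∀ j, ((c j : ℂ) - w₁) ≠ 0) (h₂ : ∀ j, ((c j : ℂ) - w₂) ≠ 0) :
    (1 / (N : ℂ)) * ∑ j : Fin N, ((c j : ℂ) - w₁)⁻¹
      - (1 / (N : ℂ)) * ∑ j : Fin N, ((c j : ℂ) - w₂)⁻¹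
      = (w₁ - w₂) * ((1 / (N : ℂ)) * ∑ j : Fin N,
          (((c j : ℂ) - w₁) * ((c j : ℂ) - w₂))⁻¹) := by
  have key : ∑ j : Fin N, (((c j : ℂ) - w₁)⁻¹ - ((c j : ℂ) - w₂)⁻¹)
      = ∑ j : Fin N, (w₁ - w₂) * (((c j : ℂ) - w₁) * ((c j : ℂ) - w₂))⁻¹ := by
    refine Finset.sum_congr rfl fun j _ => ?_
    rw [inv_sub_inv (h₁ j) (h₂ j), div_eq_mul_inv]
    ring_nf
  rw [← mul_sub (1 / (N : ℂ)), ← Finset.sum_sub_distrib, key, ← Finset.mul_sum]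
  ring

/-- Two-point Jacobian system: if `Δ(z₁,z₂) ≠ 0` then
`ω_A(z₁) − ω_A(z₂) = (z₁ − z₂) L_B / (Δ m_fc(z₁) m_fc(z₂))` and
`ω_B(z₁) − ω_B(z₂) = (z₁ − z₂) L_A / (Δ m_fc(z₁) m_fc(z₂))`. -/
theorem two_point_jacobian_system {N : ℕ} (hN : 0 < N)
    (a b : Fin N → ℝ) (ωA ωB mfc : ℂ → ℂ) (z₁ z₂ : ℂ)
    (hz₁ : 0 < z₁.im) (hz₂ : 0 < z₂.im)
    (hmapA : ∀ z : ℂ, 0 < z.im → 0 < (ωA z).im)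
    (hmapB : ∀ z : ℂ, 0 < z.im → 0 < (ωB z).im)
    (hrepA : ∀ z : ℂ, 0 < z.im →
      mfc z = (1 / (N : ℂ)) * ∑ j : Fin N, ((b j : ℂ) - ωA z)⁻¹)
    (hrepB : ∀ z : ℂ, 0 < z.im →
      mfc z = (1 / (N : ℂ)) * ∑ j : Fin N, ((a j : ℂ) - ωB z)⁻¹)
    (hsub : ∀ z : ℂ, 0 < z.im → ωA z + ωB z - z = -(mfc z)⁻¹)
    (hm₁ : mfc z₁ ≠ 0) (hm₂ : mfc z₂ ≠ 0)
    (hΔ : twoPointJacobian a b ωA ωB mfc z₁ z₂ ≠ 0) :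
    ωA z₁ - ωA z₂ = (z₁ - z₂) * twoPointSum a ωB z₁ z₂ /
        (twoPointJacobian a b ωA ωB mfc z₁ z₂ * mfc z₁ * mfc z₂) ∧
    ωB z₁ - ωB z₂ = (z₁ - z₂) * twoPointSum b ωA z₁ z₂ /
        (twoPointJacobian a b ωA ωB mfc z₁ z₂ * mfc z₁ * mfc z₂) := by
  have hne : ∀ (ω : ℂ → ℂ) (z : ℂ), 0 < (ω z).im → ∀ c : ℝ, ((c : ℂ) - ω z) ≠ 0 := by
    intro ω z hz c h
    have : ((c : ℂ) - ω z).im = -(ω z).im := by simp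
    rw [h] at this
    simp at this
    linarith
  have hA1 : ∀ j, ((b j : ℂ) - ωA z₁) ≠ 0 := fun j => hne ωA z₁ (hmapA z₁ hz₁) (b j)
  have hA2 : ∀ j, ((b j : ℂ) - ωA z₂) ≠ 0 := fun j => hne ωA z₂ (hmapA z₂ hz₂) (b j)
  have hB1 : ∀ j, ((a j : ℂ) - ωB z₁) ≠ 0 := fun j => hne ωB z₁ (hmapB z₁ hz₁) (a j)
  have hB2 : ∀ j, ((a j : ℂ) - ωB z₂) ≠ 0 := fun j => hne ωB z₂ (hmapB z₂ hz₂) (a j)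
  have h1 : mfc z₁ - mfc z₂ = (ωA z₁ - ωA z₂) * twoPointSum b ωA z₁ z₂ := by
    rw [hrepA z₁ hz₁, hrepA z₂ hz₂]
    exact diff_rep b (ωA z₁) (ωA z₂) hA1 hA2
  have h2 : mfc z₁ - mfc z₂ = (ωB z₁ - ωB z₂) * twoPointSum a ωB z₁ z₂ := by
    rw [hrepB z₁ hz₁, hrepB z₂ hz₂]
    exact diff_rep a (ωB z₁) (ωB z₂) hB1 hB2
  have e1 := hsub z₁ hz₁
  have e2 := hsub z₂ hz₂
  have hinv1 : mfc z₁ * (mfc z₁)⁻¹ = 1 := mul_inv_cancel₀ hm₁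
  have hinv2 : mfc z₂ * (mfc z₂)⁻¹ = 1 := mul_inv_cancel₀ hm₂
  have e1' : (ωA z₁ + ωB z₁ - z₁) * mfc z₁ = -1 := by
    linear_combination mfc z₁ * e1 - hinv1
  have e2' : (ωA z₂ + ωB z₂ - z₂) * mfc z₂ = -1 := by
    linear_combination mfc z₂ * e2 - hinv2
  set LA := twoPointSum a ωB z₁ z₂ with hLAdef
  set LB := twoPointSum b ωA z₁ z₂ with hLBdef
  set Δ := twoPointJacobian a b ωA ωB mfc z₁ z₂ with hΔdef
  set P := mfc z₁ * mfc z₂ with hPdef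
  have hP : P ≠ 0 := mul_ne_zero hm₁ hm₂
  have h3 : (ωA z₁ - ωA z₂ + (ωB z₁ - ωB z₂) - (z₁ - z₂)) * P = mfc z₁ - mfc z₂ := by
    rw [hPdef]
    linear_combination mfc z₂ * e1' - mfc z₁ * e2'
  have hΔP : Δ * P * P = P * (LA + LB) - LA * LB := by
    rw [hΔdef, hPdef, twoPointJacobian, ← hLAdef, ← hLBdef, ← hPdef]
    field_simp
    ring
  have hD : Δ * mfc z₁ * mfc z₂ ≠ 0 := by
    intro h
    rcases mul_eq_zero.mp h with h' | h'
    · rcases mul_eq_zero.mp h' with h'' | h''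
      · exact hΔ h''
      · exact hm₁ h''
    · exact hm₂ h'
  constructor
  · rw [eq_div_iff hD]
    apply mul_right_cancel₀ hP
    have hDP : Δ * mfc z₁ * mfc z₂ = Δ * P := by rw [hPdef]; ring
    rw [hDP]
    linear_combination (ωA z₁ - ωA z₂) * hΔP + LA * h3 + (LA - P) * h1 + P * h2
  · rw [eq_div_iff hD]
    apply mul_right_cancel₀ hP
    have hDP : Δ * mfc z₁ * mfc z₂ = Δ * P := by rw [hPdef]; ring
    rw [hDP]
    linear_combination (ωB z₁ - ωB z₂) * hΔP + LB * h3 + (LB - P) * h2 + P * h1
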